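/- If honest replicas only enter view l+1 upon receiving a new-view message directly from the new leader, and any honest replica entering view l+1 forwards the new-view message to all replicas causing every honest replica to exit view l, then no two honest replicas are ever simultaneously in different views. -/
import Mathlib

theorem no_two_views {ι : Type*} (honest : ι → Prop)
    (view : ι → ℕ → Option ℕ) (forwarded : ι → ℕ → ℕ → Prop)
    (h1 : ∀ i t l, honest i → view i t = some (l + 1) →
      ∃ t0, t0 < t ∧ forwarded i (l + 1) t0)
    (h2 : ∀ i t0 l, honest i → forwarded i (l + 1) t0 →
      ∀ j t, honest j → t0 < t → ∀ l', l' ≤ l → view j t ≠ some l') :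
    ∀ i j t a b, honest i → honest j →
      view i t = some a → view j t = some b → a = b := by
  have key : ∀ i j t a b, honest i → honest j →
      view i t = some a → view j t = some b → a < b → False := by
    intro i j t a b hi hj hva hvb hab
    obtain ⟨l, rfl⟩ : ∃ l, b = l + 1 := ⟨b - 1, by omega⟩
    obtain ⟨t0, ht0, hf⟩ := h1 j t l hj hvb
    exact h2 j t0 l hj hf i t hi ht0 a (by omega) hva
  intro i j t a b hi hj hva hvb
  rcases lt_trichotomy a b with h | h | h
  · exact absurd (key i j t a b hi hj hva hvb h) not_false
  · exact h
  · exact absurd (key j i t b a hj hi hvb hva h) not_false
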